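/- Fix ν > 0 and τ = 1, and define c_E(N) = g(N) + g(N + ν) − g(d_0(1, N, ν)) − g(d_1(1, N, ν)) for N > 0. Then lim_{N→0⁺} c_E(N)/(N·log(1/N)) = 1/(1 + ν). That is, in the low-photon-number regime the entanglement-assisted capacity per pulse is asymptotically N·log(1/N)/(1 + ν). -/

import Mathlib

/-- g(x) = (x+1)·log(x+1) − x·log x (with the Mathlib convention log 0 = 0,
so g(0) = 0), the Holevo capacity per pulse. -/
noncomputable def g (x : ℝ) : ℝ := (x + 1) * Real.log (x + 1) - x * Real.log x

/-- d(τ, n, ν) = √(((1+τ)n + ν + 1)² − 4τn(n+1)). -/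
noncomputable def dFun (τ n ν : ℝ) : ℝ :=
  Real.sqrt (((1 + τ) * n + ν + 1) ^ 2 - 4 * τ * n * (n + 1))

/-- d_x(τ, n, ν) = (d(τ, n, ν) − 1 + (−1)^x((τ−1)n + ν))/2 for x ∈ {0,1}. -/
noncomputable def dx (x : ℕ) (τ n ν : ℝ) : ℝ :=
  (dFun τ n ν - 1 + (-1 : ℝ) ^ x * ((τ - 1) * n + ν)) / 2

/-- Shannon capacity C_S(b, τ, n, ν) = b·log(1 + τn/(b + ν)). -/
noncomputable def C_S (b τ n ν : ℝ) : ℝ := b * Real.log (1 + τ * n / (b + ν))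

/-- Holevo (joint-detection) capacity C_J(b, τ, n, ν) = b·(g((n+ν)/b) − g(ν/b)). -/
noncomputable def C_J (b τ n ν : ℝ) : ℝ := b * (g ((n + ν) / b) - g (ν / b))

/-- Entanglement-assisted capacity
C_E(b, τ, n, ν) = b·∑_{x=0,1} (g((τn + x·ν)/b) − g(d_x(τ, n/b, ν/b))). -/
noncomputable def C_E (b τ n ν : ℝ) : ℝ :=
  b * ((g ((τ * n + 0 * ν) / b) - g (dx 0 τ (n / b) (ν / b))) +
       (g ((τ * n + 1 * ν) / b) - g (dx 1 τ (n / b) (ν / b))))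

open Filter Real Topology

lemma aux_slope1 : Tendsto (fun x : ℝ => (x + 1) * Real.log (x + 1) / x) (𝓝[>] 0) (𝓝 1) := by
  have h1 : HasDerivAt (fun x : ℝ => x + 1) 1 0 := (hasDerivAt_id 0).add_const 1
  have h2 : HasDerivAt (fun x : ℝ => Real.log (x + 1)) ((0 + 1)⁻¹ * 1) 0 :=
    (Real.hasDerivAt_log (by norm_num)).comp 0 h1
  have h3 : HasDerivAt (fun x : ℝ => (x + 1) * Real.log (x + 1))
      (1 * Real.log (0 + 1) + (0 + 1) * ((0 + 1)⁻¹ * 1)) 0 := h1.mul h2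
  have h4 : HasDerivAt (fun x : ℝ => (x + 1) * Real.log (x + 1)) 1 0 := by
    convert h3 using 1; simp
  rw [hasDerivAt_iff_tendsto_slope] at h4
  have h5 := h4.mono_left (nhdsWithin_mono _ (fun x hx => ne_of_gt hx))
  refine h5.congr' ?_
  filter_upwards [eventually_mem_nhdsWithin] with x (hx : 0 < x)
  simp [slope_def_field]

lemma inv_log_tendsto : Tendsto (fun N : ℝ => (Real.log N)⁻¹) (𝓝[>] 0) (𝓝 0) := by
  have h := Real.tendsto_log_nhdsGT_zero
  have h2 : Tendsto (fun N : ℝ => -Real.log N) (𝓝[>] 0) atTop :=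
    tendsto_neg_atBot_atTop.comp h
  have h3 := h2.inv_tendsto_atTop
  have h4 := h3.neg
  simp only [Pi.inv_apply, inv_neg, neg_neg, neg_zero] at h4
  exact h4

lemma lemA (f : ℝ → ℝ) (c : ℝ) (hc : 0 < c)
    (hpos : ∀ᶠ N in 𝓝[>] (0:ℝ), 0 < f N)
    (hf : Tendsto (fun N => f N / N) (𝓝[>] (0:ℝ)) (𝓝 c)) :
    Tendsto (fun N => g (f N) / (N * Real.log (1 / N))) (𝓝[>] (0:ℝ)) (𝓝 c) := by
  have hNpos : ∀ᶠ N in 𝓝[>] (0:ℝ), 0 < N := eventually_mem_nhdsWithin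
  have hNlt1 : ∀ᶠ N in 𝓝[>] (0:ℝ), N < 1 := by
    have : Set.Iio (1:ℝ) ∈ 𝓝 (0:ℝ) := Iio_mem_nhds (by norm_num)
    exact eventually_nhdsWithin_of_eventually_nhds this
  have hN0 : Tendsto (fun N : ℝ => N) (𝓝[>] (0:ℝ)) (𝓝 0) :=
    tendsto_id.mono_right nhdsWithin_le_nhds
  -- f tends to 0 from the right
  have hf0 : Tendsto f (𝓝[>] (0:ℝ)) (𝓝 0) := by
    have h := hf.mul hN0
    rw [mul_zero] at h
    refine h.congr' ?_
    filter_upwards [hNpos] with N hN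
    field_simp
  have hf0' : Tendsto f (𝓝[>] (0:ℝ)) (𝓝[>] 0) := by
    rw [tendsto_nhdsWithin_iff]
    exact ⟨hf0, hpos⟩
  -- log f N / log N → 1
  have hlogc : Tendsto (fun N => Real.log (f N / N)) (𝓝[>] (0:ℝ)) (𝓝 (Real.log c)) :=
    ((Real.continuousAt_log hc.ne').tendsto).comp hf
  have hlograt : Tendsto (fun N => Real.log (f N) / Real.log N) (𝓝[>] (0:ℝ)) (𝓝 1) := by
    have h := (hlogc.mul inv_log_tendsto).add_const 1
    rw [mul_zero, zero_add] at h
    refine h.congr' ?_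
    filter_upwards [hNpos, hNlt1, hpos] with N hN h1 hfN
    have hlogN : Real.log N ≠ 0 := ne_of_lt (Real.log_neg hN h1)
    rw [Real.log_div hfN.ne' hN.ne']
    field_simp
    ring
  -- 1 / log(1/N) → 0
  have hinvL : Tendsto (fun N : ℝ => (Real.log (1 / N))⁻¹) (𝓝[>] (0:ℝ)) (𝓝 0) := by
    have h := inv_log_tendsto.neg
    rw [neg_zero] at h
    refine h.congr fun N => ?_
    rw [one_div, Real.log_inv, inv_neg]
  have hslope := aux_slope1.comp hf0'
  -- combine
  have hmain := hf.mul ((hslope.mul hinvL).add hlograt)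
  rw [mul_zero, zero_add, mul_one] at hmain
  refine hmain.congr' ?_
  filter_upwards [hNpos, hNlt1, hpos] with N hN h1 hfN
  have hlogN : Real.log N ≠ 0 := ne_of_lt (Real.log_neg hN h1)
  have hL : Real.log (1 / N) = -Real.log N := by rw [one_div, Real.log_inv]
  simp only [Function.comp_apply, g, hL]
  field_simp
  ring


/-- STATEMENT 13: for fixed ν > 0 and τ = 1, the per-pulse entanglement-assisted
capacity c_E(N) = g(N) + g(N+ν) − g(d_0(1,N,ν)) − g(d_1(1,N,ν)) satisfies
lim_{N→0⁺} c_E(N)/(N·log(1/N)) = 1/(1+ν). -/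
theorem ea_low_photon_asymptotics (ν : ℝ) (hν : 0 < ν) :
    Filter.Tendsto
      (fun N : ℝ =>
        (g N + g (N + ν) - g (dx 0 1 N ν) - g (dx 1 1 N ν)) / (N * Real.log (1 / N)))
      (nhdsWithin 0 (Set.Ioi 0)) (nhds (1 / (1 + ν))) := by
  have hν1 : (0:ℝ) < 1 + ν := by linarith
  have hNpos : ∀ᶠ N in 𝓝[>] (0:ℝ), 0 < N := eventually_mem_nhdsWithin
  have hNlt1 : ∀ᶠ N in 𝓝[>] (0:ℝ), N < 1 := by
    have : Set.Iio (1:ℝ) ∈ 𝓝 (0:ℝ) := Iio_mem_nhds (by norm_num)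
    exact eventually_nhdsWithin_of_eventually_nhds this
  set d1 : ℝ → ℝ := fun N => dx 1 1 N ν with hd1def
  -- explicit formula for d1
  have hd1 : ∀ N : ℝ, d1 N = (Real.sqrt ((ν + 1) ^ 2 + 4 * N * ν) - (1 + ν)) / 2 := by
    intro N
    have harg : ((1 + 1) * N + ν + 1) ^ 2 - 4 * 1 * N * (N + 1) = (ν + 1) ^ 2 + 4 * N * ν := by
      ring
    simp only [hd1def, dx, dFun, harg]
    ring
  have hd0 : ∀ N : ℝ, dx 0 1 N ν = ν + d1 N := by
    intro N
    simp only [hd1def, dx]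
    ring
  have hX : ∀ N : ℝ, 0 < N → (0:ℝ) ≤ (ν + 1) ^ 2 + 4 * N * ν := by
    intro N hN; positivity
  have hd1pos : ∀ᶠ N in 𝓝[>] (0:ℝ), 0 < d1 N := by
    filter_upwards [hNpos] with N hN
    rw [hd1]
    have h2 : (1 + ν) < Real.sqrt ((ν + 1) ^ 2 + 4 * N * ν) := by
      rw [Real.lt_sqrt (by linarith)]
      nlinarith
    linarith
  -- d1 N / N → ν / (1 + ν)
  have hd1ratio : Tendsto (fun N => d1 N / N) (𝓝[>] (0:ℝ))
      (𝓝 (ν / (1 + ν))) := by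
    have hsq : Tendsto (fun N : ℝ => Real.sqrt ((ν + 1) ^ 2 + 4 * N * ν) + (1 + ν))
        (𝓝[>] (0:ℝ)) (𝓝 (2 * (1 + ν))) := by
      have hc : Continuous (fun N : ℝ => Real.sqrt ((ν + 1) ^ 2 + 4 * N * ν) + (1 + ν)) := by
        continuity
      have := (hc.tendsto 0).mono_left (nhdsWithin_le_nhds (s := Set.Ioi (0:ℝ)))
      convert this using 2
      rw [mul_zero, zero_mul, add_zero, Real.sqrt_sq (by linarith)]
      ring
    have h := (tendsto_const_nhds (x := 2 * ν)).div hsq (by positivity)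
    have hval : 2 * ν / (2 * (1 + ν)) = ν / (1 + ν) := by
      field_simp
    rw [hval] at h
    refine h.congr' ?_
    filter_upwards [hNpos] with N hN
    have hXN := hX N hN
    have hs := Real.sq_sqrt hXN
    have hsnn := Real.sqrt_nonneg ((ν + 1) ^ 2 + 4 * N * ν)
    simp only [Pi.div_apply]
    rw [hd1, div_div, div_eq_div_iff (by positivity) (by positivity)]
    nlinarith
  -- d1 → 0 within Ioi 0
  have hd10 : Tendsto d1 (𝓝[>] (0:ℝ)) (𝓝[>] 0) := by
    rw [tendsto_nhdsWithin_iff]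
    constructor
    · have hN0 : Tendsto (fun N : ℝ => N) (𝓝[>] (0:ℝ)) (𝓝 0) :=
        tendsto_id.mono_right nhdsWithin_le_nhds
      have h := hd1ratio.mul hN0
      rw [mul_zero] at h
      refine h.congr' ?_
      filter_upwards [hNpos] with N hN
      field_simp
    · exact hd1pos
  -- derivative of g at ν
  have hg' : HasDerivAt g (Real.log (ν + 1) - Real.log ν) ν := by
    have h1 : HasDerivAt (fun x : ℝ => x + 1) 1 ν := (hasDerivAt_id ν).add_const 1
    have h2 : HasDerivAt (fun x : ℝ => Real.log (x + 1)) ((ν + 1)⁻¹ * 1) ν :=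
      (Real.hasDerivAt_log (by linarith)).comp ν h1
    have h3 : HasDerivAt (fun x : ℝ => (x + 1) * Real.log (x + 1))
        (1 * Real.log (ν + 1) + (ν + 1) * ((ν + 1)⁻¹ * 1)) ν := h1.mul h2
    have h4 : HasDerivAt (fun x : ℝ => x * Real.log x)
        (1 * Real.log ν + ν * ν⁻¹) ν := (hasDerivAt_id ν).mul (Real.hasDerivAt_log hν.ne')
    have h5 : HasDerivAt g (1 * Real.log (ν + 1) + (ν + 1) * ((ν + 1)⁻¹ * 1) -
        (1 * Real.log ν + ν * ν⁻¹)) ν := h3.sub h4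
    convert h5 using 1
    simp only [mul_inv_cancel₀ hν.ne', mul_inv_cancel₀ (show ν + 1 ≠ 0 by linarith), mul_one, one_mul]
    ring
  -- slope of g at ν along h → 0+
  have hslopeg : Tendsto (fun h : ℝ => (g (ν + h) - g ν) / h) (𝓝[>] (0:ℝ))
      (𝓝 (Real.log (ν + 1) - Real.log ν)) := by
    rw [hasDerivAt_iff_tendsto_slope] at hg'
    have hmap : Tendsto (fun h : ℝ => ν + h) (𝓝[>] (0:ℝ)) (𝓝[≠] ν) := by
      rw [tendsto_nhdsWithin_iff]
      constructor
      · have : Tendsto (fun h : ℝ => ν + h) (𝓝 (0:ℝ)) (𝓝 (ν + 0)) :=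
          tendsto_const_nhds.add tendsto_id
        rw [add_zero] at this
        exact this.mono_left nhdsWithin_le_nhds
      · filter_upwards [hNpos] with h hh
        simp only [Set.mem_compl_iff, Set.mem_singleton_iff]
        intro hc; nlinarith [hc]
    have h := hg'.comp hmap
    refine h.congr ?_
    intro h
    simp [slope_def_field]
  have hcancel : ∀ a b x : ℝ, x ≠ 0 → a / x * (x / b) = a / b := by
    intro a b x hx
    rcases eq_or_ne b 0 with rfl | hb
    · simp
    · field_simp
  -- N / (N * log(1/N)) → 0
  have hinvL : Tendsto (fun N : ℝ => (Real.log (1 / N))⁻¹) (𝓝[>] (0:ℝ)) (𝓝 0) := by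
    have h := inv_log_tendsto.neg
    rw [neg_zero] at h
    refine h.congr fun N => ?_
    rw [one_div, Real.log_inv, inv_neg]
  have hNL : Tendsto (fun N : ℝ => N / (N * Real.log (1 / N))) (𝓝[>] (0:ℝ)) (𝓝 0) := by
    refine hinvL.congr' ?_
    filter_upwards [hNpos] with N hN
    exact (div_mul_cancel_left₀ hN.ne' _).symm
  -- the four pieces
  have T1 : Tendsto (fun N => g N / (N * Real.log (1 / N))) (𝓝[>] (0:ℝ)) (𝓝 1) := by
    refine lemA (fun N => N) 1 one_pos hNpos ?_
    have : Tendsto (fun _ : ℝ => (1:ℝ)) (𝓝[>] (0:ℝ)) (𝓝 1) := tendsto_const_nhds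
    refine this.congr' ?_
    filter_upwards [hNpos] with N hN
    rw [div_self hN.ne']
  have T2 : Tendsto (fun N => g (d1 N) / (N * Real.log (1 / N))) (𝓝[>] (0:ℝ))
      (𝓝 (ν / (1 + ν))) :=
    lemA d1 (ν / (1 + ν)) (by positivity) hd1pos hd1ratio
  have T3 : Tendsto (fun N => (g (ν + N) - g ν) / (N * Real.log (1 / N))) (𝓝[>] (0:ℝ))
      (𝓝 0) := by
    have h := hslopeg.mul hNL
    rw [mul_zero] at h
    refine h.congr' ?_
    filter_upwards [hNpos] with N hN
    exact hcancel _ _ _ hN.ne'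
  have T4 : Tendsto (fun N => (g (ν + d1 N) - g ν) / (N * Real.log (1 / N))) (𝓝[>] (0:ℝ))
      (𝓝 0) := by
    have hd1L : Tendsto (fun N => d1 N / (N * Real.log (1 / N))) (𝓝[>] (0:ℝ)) (𝓝 0) := by
      have h := hd1ratio.mul hNL
      rw [mul_zero] at h
      refine h.congr' ?_
      filter_upwards [hNpos] with N hN
      exact hcancel _ _ _ hN.ne'
    have h := (hslopeg.comp hd10).mul hd1L
    rw [mul_zero] at h
    refine h.congr' ?_
    filter_upwards [hd1pos] with N hN
    simp only [Function.comp_apply]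
    exact hcancel _ _ _ hN.ne'
  -- combine
  have hcomb := ((T1.sub T2).add T3).sub T4
  have hval : (1 - ν / (1 + ν) + 0 - 0 : ℝ) = 1 / (1 + ν) := by
    field_simp
    ring
  rw [hval] at hcomb
  refine hcomb.congr ?_
  intro N
  have e1 : dx 1 1 N ν = d1 N := rfl
  rw [hd0 N, add_comm N ν, e1]
  ring
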